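/- Let Γ be a finitely generated subgroup of UT(n,ℚ). Then there exists an invertible diagonal n×n rational matrix P such that every entry of P A P⁻¹ is an integer for every A ∈ Γ (so that conjugation by P embeds Γ into UT(n,ℤ)); moreover, if every nontrivial element of Γ is essentially hyperbolic, then so is every nontrivial P A P⁻¹. -/

import Mathlib

section Matrices

variable {R : Type*} {n : ℕ}

theorem diag_mul_of_triangular [CommRing R] {A B : Matrix (Fin n) (Fin n) R}
    (hA : A.BlockTriangular id) (hB : B.BlockTriangular id) (i : Fin n) :
    (A * B) i i = A i i * B i i := by
  rw [Matrix.mul_apply]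
  apply Finset.sum_eq_single i
  · intro k _ hk
    rcases lt_or_gt_of_ne hk with h | h
    · rw [hA (show (id : Fin n → Fin n) k < id i from h), zero_mul]
    · rw [hB (show (id : Fin n → Fin n) i < id k from h), mul_zero]
  · intro h; exact absurd (Finset.mem_univ i) h

/-- The group `UT(n,R)` of upper triangular `n × n` matrices over `R` with all diagonal
entries equal to `1`, realised as a subgroup of the group of units of the matrix ring. -/
def UT (n : ℕ) (R : Type*) [CommRing R] : Subgroup (Matrix (Fin n) (Fin n) R)ˣ where
  carrier := {A | (∀ i j : Fin n, j < i → (A : Matrix (Fin n) (Fin n) R) i j = 0) ∧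
    ∀ i : Fin n, (A : Matrix (Fin n) (Fin n) R) i i = 1}
  one_mem' := by
    refine ⟨fun i j hij => ?_, fun i => ?_⟩
    · simp [Matrix.one_apply, (ne_of_lt hij).symm]
    · simp
  mul_mem' := by
    rintro A B ⟨hA1, hA2⟩ ⟨hB1, hB2⟩
    have hA : (A : Matrix (Fin n) (Fin n) R).BlockTriangular id := fun i j h => hA1 i j h
    have hB : (B : Matrix (Fin n) (Fin n) R).BlockTriangular id := fun i j h => hB1 i j h
    refine ⟨fun i j hij => ?_, fun i => ?_⟩
    · exact (hA.mul hB) (show (id : Fin n → Fin n) j < id i from hij)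
    · rw [Units.val_mul, diag_mul_of_triangular hA hB, hA2, hB2, one_mul]
  inv_mem' := by
    rintro A ⟨hA1, hA2⟩
    have hA : (A : Matrix (Fin n) (Fin n) R).BlockTriangular id := fun i j h => hA1 i j h
    haveI := A.invertible
    have hAinv : ((A : Matrix (Fin n) (Fin n) R)⁻¹).BlockTriangular id :=
      Matrix.blockTriangular_inv_of_blockTriangular hA
    have hcoe : ((A⁻¹ : (Matrix (Fin n) (Fin n) R)ˣ) : Matrix (Fin n) (Fin n) R)
        = (A : Matrix (Fin n) (Fin n) R)⁻¹ := Matrix.coe_units_inv A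
    refine ⟨fun i j hij => ?_, fun i => ?_⟩
    · rw [hcoe]; exact hAinv (show (id : Fin n → Fin n) j < id i from hij)
    · have h1 : ((A : Matrix (Fin n) (Fin n) R) * (A : Matrix (Fin n) (Fin n) R)⁻¹) i i = 1 := by
        rw [Matrix.mul_inv_of_invertible]; simp
      rw [diag_mul_of_triangular hA hAinv, hA2, one_mul] at h1
      rw [hcoe, h1]

/-- The group `T*(n,R)` of upper triangular `n × n` matrices over a linearly ordered field `R`
with positive diagonal entries, realised as a subgroup of the units of the matrix ring. -/
def Tstar (n : ℕ) (R : Type*) [Field R] [LinearOrder R] [IsStrictOrderedRing R] : Subgroup (Matrix (Fin n) (Fin n) R)ˣ where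
  carrier := {A | (∀ i j : Fin n, j < i → (A : Matrix (Fin n) (Fin n) R) i j = 0) ∧
    ∀ i : Fin n, 0 < (A : Matrix (Fin n) (Fin n) R) i i}
  one_mem' := by
    refine ⟨fun i j hij => ?_, fun i => ?_⟩
    · simp [Matrix.one_apply, (ne_of_lt hij).symm]
    · simp
  mul_mem' := by
    rintro A B ⟨hA1, hA2⟩ ⟨hB1, hB2⟩
    have hA : (A : Matrix (Fin n) (Fin n) R).BlockTriangular id := fun i j h => hA1 i j h
    have hB : (B : Matrix (Fin n) (Fin n) R).BlockTriangular id := fun i j h => hB1 i j h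
    refine ⟨fun i j hij => ?_, fun i => ?_⟩
    · exact (hA.mul hB) (show (id : Fin n → Fin n) j < id i from hij)
    · rw [Units.val_mul, diag_mul_of_triangular hA hB]
      exact mul_pos (hA2 i) (hB2 i)
  inv_mem' := by
    rintro A ⟨hA1, hA2⟩
    have hA : (A : Matrix (Fin n) (Fin n) R).BlockTriangular id := fun i j h => hA1 i j h
    haveI := A.invertible
    have hAinv : ((A : Matrix (Fin n) (Fin n) R)⁻¹).BlockTriangular id :=
      Matrix.blockTriangular_inv_of_blockTriangular hA
    have hcoe : ((A⁻¹ : (Matrix (Fin n) (Fin n) R)ˣ) : Matrix (Fin n) (Fin n) R)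
        = (A : Matrix (Fin n) (Fin n) R)⁻¹ := Matrix.coe_units_inv A
    refine ⟨fun i j hij => ?_, fun i => ?_⟩
    · rw [hcoe]; exact hAinv (show (id : Fin n → Fin n) j < id i from hij)
    · have h1 : ((A : Matrix (Fin n) (Fin n) R) * (A : Matrix (Fin n) (Fin n) R)⁻¹) i i = 1 := by
        rw [Matrix.mul_inv_of_invertible]; simp
      rw [diag_mul_of_triangular hA hAinv] at h1
      rw [hcoe]
      rcases lt_trichotomy ((A : Matrix (Fin n) (Fin n) R)⁻¹ i i) 0 with h | h | h
      · exact absurd h1 (by nlinarith [hA2 i])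
      · rw [h, mul_zero] at h1; exact absurd h1 zero_ne_one
      · exact h

/-- The last index of `Fin N` (any element of `Fin N` witnesses `0 < N`). -/
def lastOf {N : ℕ} (r : Fin N) : Fin N := ⟨N - 1, Nat.sub_lt r.pos Nat.one_pos⟩

/-- A square matrix `g` (upper triangular, with positive diagonal and bottom-right entry `1`)
is *essentially hyperbolic* if `g ≠ 1` and there is a row index `r` which is not the last row
such that `(g-1)_{r,N} ≠ 0` (where `N` is the last column) and every nonzero entry of `g - 1`
lies either in a row strictly above `r`, or at position `(r, N)`. -/
def EssentiallyHyperbolic {N : ℕ} {R : Type*} [CommRing R]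
    (g : Matrix (Fin N) (Fin N) R) : Prop :=
  g ≠ 1 ∧ ∃ r : Fin N, (r : ℕ) + 1 < N ∧ (g - 1) r (lastOf r) ≠ 0 ∧
    ∀ i j : Fin N, (g - 1) i j ≠ 0 → i < r ∨ (i = r ∧ j = lastOf r)

end Matrices

/-- The group of order-preserving additive automorphisms of a linearly ordered abelian
group `Λ`, as a subgroup of `AddAut Λ`. -/
def orderAddAut (Λ : Type*) [AddCommGroup Λ] [LinearOrder Λ] [IsOrderedAddMonoid Λ] : AddSubgroup (AddAut Λ) where
  carrier := {f | StrictMono f}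
  zero_mem' := strictMono_id
  add_mem' := by
    intro f g hf hg a b hab
    exact hf (hg hab)
  neg_mem' := by
    intro f hf a b hab
    exact hf.lt_iff_lt.1 (by simpa using hab)


lemma int_of_den_dvd {c : ℕ} {q : ℚ} (h : q.den ∣ c) {m : ℕ} (hm : 1 ≤ m) :
    ∃ z : ℤ, (c : ℚ) ^ m * q = z := by
  obtain ⟨k, hk⟩ := h
  refine ⟨(c:ℤ) ^ (m-1) * (k * q.num), ?_⟩
  have h1 : (c : ℚ) * q = (k : ℚ) * q.num := by
    rw [hk]
    push_cast
    rw [mul_comm (q.den : ℚ) k, mul_assoc, Rat.den_mul_eq_num]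
  calc (c:ℚ)^m * q = (c:ℚ)^(m-1) * ((c:ℚ) * q) := by
        rw [← mul_assoc, ← pow_succ]
        congr 2
        omega
    _ = _ := by rw [h1]; push_cast; ring

def GoodM {n : ℕ} (c : ℕ) (M : Matrix (Fin n) (Fin n) ℚ) : Prop :=
  M.BlockTriangular id ∧ ∀ i j : Fin n, ∃ z : ℤ, (c:ℚ) ^ ((j:ℕ) - (i:ℕ)) * M i j = z

lemma goodM_mul {n c : ℕ} {A B : Matrix (Fin n) (Fin n) ℚ}
    (hA : GoodM c A) (hB : GoodM c B) : GoodM c (A * B) := by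
  refine ⟨hA.1.mul hB.1, fun i j => ?_⟩
  have h : ∀ k : Fin n, ∃ z : ℤ, (c:ℚ) ^ ((j:ℕ) - (i:ℕ)) * (A i k * B k j) = z := by
    intro k
    rcases lt_or_ge (k:ℕ) (i:ℕ) with hk | hk
    · refine ⟨0, ?_⟩
      rw [hA.1 (show (id : Fin n → Fin n) k < id i from hk)]
      simp
    · rcases lt_or_ge (j:ℕ) (k:ℕ) with hk2 | hk2
      · refine ⟨0, ?_⟩
        rw [hB.1 (show (id : Fin n → Fin n) j < id k from hk2)]
        simp
      · obtain ⟨z1, h1⟩ := hA.2 i k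
        obtain ⟨z2, h2⟩ := hB.2 k j
        refine ⟨z1 * z2, ?_⟩
        have he : (j:ℕ) - (i:ℕ) = ((k:ℕ) - (i:ℕ)) + ((j:ℕ) - (k:ℕ)) := by omega
        rw [he, pow_add]
        push_cast
        linear_combination (c:ℚ) ^ ((j:ℕ) - (k:ℕ)) * B k j * h1 + (z1 : ℚ) * h2
  choose f hf using h
  refine ⟨∑ k, f k, ?_⟩
  rw [Matrix.mul_apply, Finset.mul_sum]
  push_cast
  exact Finset.sum_congr rfl fun k _ => hf k

/-- A finitely generated subgroup `Γ` of `UT(n,ℚ)` can be conjugated by an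
invertible diagonal rational matrix `P` so that all entries of `P A P⁻¹` (`A ∈ Γ`) are
integers; moreover this conjugation preserves essential hyperbolicity of all nontrivial
elements. -/
theorem fg_subgroup_UT_rat_conjugate_into_UT_int (n : ℕ)
    (Γ : Subgroup (Matrix (Fin n) (Fin n) ℚ)ˣ) (hΓsub : Γ ≤ UT n ℚ) (hΓfg : Γ.FG) :
    ∃ P : (Matrix (Fin n) (Fin n) ℚ)ˣ,
      (∀ i j : Fin n, i ≠ j → (P : Matrix (Fin n) (Fin n) ℚ) i j = 0) ∧
      (∀ A ∈ Γ, ∀ i j : Fin n, ∃ z : ℤ,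
        ((P * A * P⁻¹ : (Matrix (Fin n) (Fin n) ℚ)ˣ) : Matrix (Fin n) (Fin n) ℚ) i j = z) ∧
      ((∀ A ∈ Γ, A ≠ 1 →
          EssentiallyHyperbolic ((A : Matrix (Fin n) (Fin n) ℚ))) →
        ∀ A ∈ Γ, A ≠ 1 →
          EssentiallyHyperbolic
            ((P * A * P⁻¹ : (Matrix (Fin n) (Fin n) ℚ)ˣ) : Matrix (Fin n) (Fin n) ℚ)) := by

  classical
  obtain ⟨S, hS⟩ := hΓfg
  set c : ℕ := ∏ A ∈ S, ∏ i : Fin n, ∏ j : Fin n,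
      (((A : (Matrix (Fin n) (Fin n) ℚ)ˣ) : Matrix (Fin n) (Fin n) ℚ) i j).den *
      (((A⁻¹ : (Matrix (Fin n) (Fin n) ℚ)ˣ) : Matrix (Fin n) (Fin n) ℚ) i j).den with hc_def
  have hcpos : 0 < c := by
    refine Finset.prod_pos fun A _ => Finset.prod_pos fun i _ => Finset.prod_pos fun j _ => ?_
    exact Nat.mul_pos (Rat.den_pos _) (Rat.den_pos _)
  have hcne : ((c:ℚ)) ≠ 0 := by positivity
  have hdvd : ∀ A ∈ S, ∀ i j : Fin n,
      (((A : (Matrix (Fin n) (Fin n) ℚ)ˣ) : Matrix (Fin n) (Fin n) ℚ) i j).den ∣ c ∧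
      (((A⁻¹ : (Matrix (Fin n) (Fin n) ℚ)ˣ) : Matrix (Fin n) (Fin n) ℚ) i j).den ∣ c := by
    intro A hA i j
    have hmm : (((A : (Matrix (Fin n) (Fin n) ℚ)ˣ) : Matrix (Fin n) (Fin n) ℚ) i j).den *
      (((A⁻¹ : (Matrix (Fin n) (Fin n) ℚ)ˣ) : Matrix (Fin n) (Fin n) ℚ) i j).den ∣ c := by
      refine dvd_trans ?_ (Finset.dvd_prod_of_mem _ hA)
      refine dvd_trans ?_ (Finset.dvd_prod_of_mem _ (Finset.mem_univ i))
      exact Finset.dvd_prod_of_mem _ (Finset.mem_univ j)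
    exact ⟨dvd_trans (dvd_mul_right _ _) hmm, dvd_trans (dvd_mul_left _ _) hmm⟩
  have hmemGood : ∀ A : (Matrix (Fin n) (Fin n) ℚ)ˣ, A ∈ Γ →
      (∀ i j : Fin n, ((A : Matrix (Fin n) (Fin n) ℚ) i j).den ∣ c) →
      GoodM c (A : Matrix (Fin n) (Fin n) ℚ) := by
    intro A hAΓ hden
    obtain ⟨htri, hdiag⟩ := hΓsub hAΓ
    refine ⟨fun i j h => htri i j h, fun i j => ?_⟩
    rcases lt_trichotomy (i:ℕ) (j:ℕ) with h | h | h
    · exact int_of_den_dvd (hden i j) (by omega)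
    · have : i = j := Fin.ext h
      subst this
      exact ⟨1, by simp [hdiag i]⟩
    · refine ⟨0, ?_⟩
      rw [htri i j (Fin.lt_def.mpr h)]
      simp
  have hkey : ∀ A : (Matrix (Fin n) (Fin n) ℚ)ˣ, A ∈ Γ →
      GoodM c (A : Matrix (Fin n) (Fin n) ℚ) := by
    intro A hAΓ
    rw [← hS] at hAΓ
    have : GoodM c (A : Matrix (Fin n) (Fin n) ℚ) ∧
        GoodM c ((A⁻¹ : (Matrix (Fin n) (Fin n) ℚ)ˣ) : Matrix (Fin n) (Fin n) ℚ) := by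
      refine Subgroup.closure_induction
        (p := fun (x : (Matrix (Fin n) (Fin n) ℚ)ˣ) _ => GoodM c (x : Matrix (Fin n) (Fin n) ℚ) ∧
          GoodM c ((x⁻¹ : (Matrix (Fin n) (Fin n) ℚ)ˣ) : Matrix (Fin n) (Fin n) ℚ))
        ?_ ?_ ?_ ?_ hAΓ
      · intro x hx
        have hxΓ : x ∈ Γ := by rw [← hS]; exact Subgroup.subset_closure hx
        have hxiΓ : x⁻¹ ∈ Γ := inv_mem hxΓ
        exact ⟨hmemGood x hxΓ (fun i j => (hdvd x hx i j).1),
          hmemGood x⁻¹ hxiΓ (fun i j => (hdvd x hx i j).2)⟩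
      · have h1 : GoodM c ((1 : (Matrix (Fin n) (Fin n) ℚ)ˣ) : Matrix (Fin n) (Fin n) ℚ) :=
          hmemGood 1 (one_mem Γ) (fun i j => by
            rcases eq_or_ne i j with h | h <;> simp [Matrix.one_apply, h])
        exact ⟨h1, by simpa using h1⟩
      · intro x y hx hy ⟨hx1, hx2⟩ ⟨hy1, hy2⟩
        refine ⟨by rw [Units.val_mul]; exact goodM_mul hx1 hy1, ?_⟩
        rw [mul_inv_rev, Units.val_mul]
        exact goodM_mul hy2 hx2
      · intro x hx ⟨hx1, hx2⟩
        exact ⟨hx2, by rw [inv_inv]; exact hx1⟩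
    exact this.1
  set d : Fin n → ℚ := fun i => (c:ℚ) ^ (n - (i:ℕ)) with hd_def
  have hdne : ∀ i, d i ≠ 0 := fun i => pow_ne_zero _ hcne
  have hPmul : Matrix.diagonal d * Matrix.diagonal (fun i => (d i)⁻¹) = 1 := by
    rw [Matrix.diagonal_mul_diagonal]
    rw [show (fun i => d i * (d i)⁻¹) = fun _ => (1:ℚ) from
      funext fun i => mul_inv_cancel₀ (hdne i), Matrix.diagonal_one]
  have hPmul' : Matrix.diagonal (fun i => (d i)⁻¹) * Matrix.diagonal d = 1 := by
    rw [Matrix.diagonal_mul_diagonal]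
    rw [show (fun i => (d i)⁻¹ * d i) = fun _ => (1:ℚ) from
      funext fun i => inv_mul_cancel₀ (hdne i), Matrix.diagonal_one]
  have hform : ∀ A : (Matrix (Fin n) (Fin n) ℚ)ˣ, A ∈ Γ → ∀ i j : Fin n,
      ((⟨Matrix.diagonal d, Matrix.diagonal (fun i => (d i)⁻¹), hPmul, hPmul'⟩ * A *
        (⟨Matrix.diagonal d, Matrix.diagonal (fun i => (d i)⁻¹), hPmul, hPmul'⟩)⁻¹ :
          (Matrix (Fin n) (Fin n) ℚ)ˣ) : Matrix (Fin n) (Fin n) ℚ) i j =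
        (c:ℚ) ^ ((j:ℕ) - (i:ℕ)) * (A : Matrix (Fin n) (Fin n) ℚ) i j := by
    intro A hAΓ i j
    have hcoe : ((⟨Matrix.diagonal d, Matrix.diagonal (fun i => (d i)⁻¹), hPmul, hPmul'⟩ * A *
        (⟨Matrix.diagonal d, Matrix.diagonal (fun i => (d i)⁻¹), hPmul, hPmul'⟩)⁻¹ :
          (Matrix (Fin n) (Fin n) ℚ)ˣ) : Matrix (Fin n) (Fin n) ℚ) =
        Matrix.diagonal d * (A : Matrix (Fin n) (Fin n) ℚ) *
          Matrix.diagonal (fun i => (d i)⁻¹) := rfl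
    rw [hcoe, Matrix.mul_diagonal, Matrix.diagonal_mul]
    rcases le_or_gt (i:ℕ) (j:ℕ) with h | h
    · have hjn : (j:ℕ) < n := j.isLt
      have he : n - (i:ℕ) = ((j:ℕ) - (i:ℕ)) + (n - (j:ℕ)) := by omega
      rw [hd_def]
      simp only
      rw [he, pow_add]
      have hne2 : ((c:ℚ) ^ (n - (j:ℕ))) ≠ 0 := pow_ne_zero _ hcne
      field_simp
    · have h0 : (A : Matrix (Fin n) (Fin n) ℚ) i j = 0 :=
        (hΓsub hAΓ).1 i j (Fin.lt_def.mpr h)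
      rw [h0]
      ring
  refine ⟨⟨Matrix.diagonal d, Matrix.diagonal (fun i => (d i)⁻¹), hPmul, hPmul'⟩, ?_, ?_, ?_⟩
  · intro i j hij
    exact Matrix.diagonal_apply_ne d hij
  · intro A hAΓ i j
    obtain ⟨z, hz⟩ := (hkey A hAΓ).2 i j
    exact ⟨z, by rw [hform A hAΓ i j, hz]⟩
  · intro hEH A hAΓ hAne
    obtain ⟨hne, r, hr, hrN, hsupp⟩ := hEH A hAΓ hAne
    have hdiff : ∀ i j : Fin n,
        (((⟨Matrix.diagonal d, Matrix.diagonal (fun i => (d i)⁻¹), hPmul, hPmul'⟩ * A *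
          (⟨Matrix.diagonal d, Matrix.diagonal (fun i => (d i)⁻¹), hPmul, hPmul'⟩)⁻¹ :
            (Matrix (Fin n) (Fin n) ℚ)ˣ) : Matrix (Fin n) (Fin n) ℚ) - 1) i j =
          (c:ℚ) ^ ((j:ℕ) - (i:ℕ)) * ((A : Matrix (Fin n) (Fin n) ℚ) - 1) i j := by
      intro i j
      rcases eq_or_ne i j with h | h
      · subst h
        simp only [Matrix.sub_apply, Matrix.one_apply_eq, hform A hAΓ i i, Nat.sub_self,
          pow_zero, one_mul]
      · simp only [Matrix.sub_apply, Matrix.one_apply_ne h, hform A hAΓ i j, sub_zero]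
    have hpne : ∀ i j : Fin n, ((c:ℚ) ^ ((j:ℕ) - (i:ℕ)) : ℚ) ≠ 0 :=
      fun i j => pow_ne_zero _ hcne
    refine ⟨?_, r, hr, ?_, ?_⟩
    · intro h1
      apply hrN
      have h2 := hdiff r (lastOf r)
      rw [h1, sub_self] at h2
      have h3 : (0 : ℚ) = (c:ℚ) ^ (((lastOf r : Fin n):ℕ) - (r:ℕ)) *
          ((A : Matrix (Fin n) (Fin n) ℚ) - 1) r (lastOf r) := h2
      rcases mul_eq_zero.1 h3.symm with h4 | h4
      · exact absurd h4 (hpne r (lastOf r))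
      · exact h4
    · rw [hdiff]
      exact mul_ne_zero (hpne r (lastOf r)) hrN
    · intro i j hij
      apply hsupp
      rw [hdiff] at hij
      intro h0
      exact hij (by rw [h0, mul_zero])
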